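/- Let A be a memory interval and let B₁,…,B_k be all branches of T intersecting A, ordered left-to-right. Then the sequence of depths of the bottommost vertices of these branches contained in A, namely (max_{v ∈ B_i ∩ A} d(v)) for i = 1,…,k, is non-increasing. -/

import Mathlib

namespace VEB

inductive OTree : Type where
  | node : List OTree → OTree

def OTree.children : OTree → List OTree
  | .node cs => cs

mutual
  def height : OTree → ℕ
    | .node cs => 1 + heightList cs
  def heightList : List OTree → ℕ
    | [] => 0
    | c :: cs => max (height c) (heightList cs)
end

def subtreeAt? : OTree → List ℕ → Option OTree
  | t, [] => some t
  | t, i :: p =>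
    match t.children[i]? with
    | some c => subtreeAt? c p
    | none => none

/-- `p` is (the path of) a vertex of `t`. -/
def IsVertex (t : OTree) (p : List ℕ) : Prop := (subtreeAt? t p).isSome

/-- `p` is a leaf of `t`. -/
def IsLeaf (t : OTree) (p : List ℕ) : Prop := subtreeAt? t p = some (.node [])

/-- All leaves of `t` are at the same depth (the bottom level). -/
def Uniform (t : OTree) : Prop := ∀ p, IsLeaf t p → p.length + 1 = height t

/-- The top `m+1` levels of `t` (the truncation of height `m+1`). -/
def trunc : ℕ → OTree → OTree
  | 0, _ => .node []
  | m+1, t => .node (t.children.map (trunc m))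

/-- Paths of the vertices at depth `m`, in left-to-right order. -/
def levelPaths : ℕ → OTree → List (List ℕ)
  | 0, _ => [[]]
  | m+1, t => (t.children.zipIdx.map fun ic => (levelPaths m ic.1).map (ic.2 :: ·)).flatten

/-- The level at which a tree of height `h` is cut: `max ⌊ε h⌋ 1`. -/
noncomputable def cutLevel (ε : ℝ) (h : ℕ) : ℕ := max ⌊ε * (h : ℝ)⌋₊ 1

/-- The van Emde Boas order of the vertex paths of `t` (with recursion fuel). -/
noncomputable def vEBAux (ε : ℝ) : ℕ → OTree → List (List ℕ)
  | 0, _ => []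
  | fuel+1, t =>
    if height t ≤ 1 then [[]]
    else
      let m := cutLevel ε (height t)
      vEBAux ε fuel (trunc (m - 1) t) ++
        ((levelPaths m t).map fun q =>
          match subtreeAt? t q with
          | some s => (vEBAux ε fuel s).map (q ++ ·)
          | none => []).flatten

/-- The van Emde Boas order `vEB_ε(t)` of the vertex paths of `t`. -/
noncomputable def vEB (ε : ℝ) (t : OTree) : List (List ℕ) := vEBAux ε (height t) t

/-- Position (index) of vertex `p` in the van Emde Boas order. -/
noncomputable def pos (ε : ℝ) (t : OTree) (p : List ℕ) : ℕ := (vEB ε t).idxOf p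

/-- `A` is a set of vertices occupying consecutive positions in `vEB_ε(t)`. -/
def MemInterval (ε : ℝ) (t : OTree) (A : Set (List ℕ)) : Prop :=
  ∃ i n, A = {p | p ∈ ((vEB ε t).drop i).take n}

/-- The vertices of the decomposition `D` of `t`: pairs `(p, k)` of the root path
and the height of a decomposition subtree (with recursion fuel). -/
noncomputable def decompAux (ε : ℝ) : ℕ → OTree → List (List ℕ × ℕ)
  | 0, _ => []
  | fuel+1, t =>
    if height t ≤ 1 then [([], 1)]
    else
      let m := cutLevel ε (height t)
      ([], height t) ::
        (decompAux ε fuel (trunc (m - 1) t) ++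
          ((levelPaths m t).map fun q =>
            match subtreeAt? t q with
            | some s => (decompAux ε fuel s).map fun r => (q ++ r.1, r.2)
            | none => []).flatten)

/-- The vertices of the decomposition `D` of `t`. -/
noncomputable def decompVerts (ε : ℝ) (t : OTree) : List (List ℕ × ℕ) :=
  decompAux ε (height t) t

/-- The children in the decomposition tree `D` of the decomposition vertex `(p, k)`:
the top tree followed by the bottom trees in left-to-right order. -/
noncomputable def dChildren (ε : ℝ) (t : OTree) (p : List ℕ) (k : ℕ) : List (List ℕ × ℕ) :=
  if k ≤ 1 then []
  else
    match subtreeAt? t p with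
    | some s =>
      (p, cutLevel ε k) ::
        (levelPaths (cutLevel ε k) s).map fun q => (p ++ q, k - cutLevel ε k)
    | none => []

/-- The decomposition subtree `(p, k)` contains the vertex `w` of `t`;
equivalently, the leaf `{w}` of `D` lies in the subtree of `D` rooted at `(p, k)`. -/
def DContains (p : List ℕ) (k : ℕ) (w : List ℕ) : Prop :=
  p <+: w ∧ w.length < p.length + k

/-- Vertex `v` is to the left of the branch with leaf `ℓ`. -/
def LeftOfBranch (v ℓ : List ℕ) : Prop := List.Lex (· < ·) v (ℓ.take v.length)

/-- Vertex `v` is to the right of the branch with leaf `ℓ`. -/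
def RightOfBranch (v ℓ : List ℕ) : Prop := List.Lex (· < ·) (ℓ.take v.length) v

/-- Every internal vertex of `t` has at least `a` children. -/
def MinArity (t : OTree) (a : ℕ) : Prop :=
  ∀ p s, subtreeAt? t p = some s → s.children ≠ [] → a ≤ s.children.length

/-- Every internal vertex of `t` has at most `b` children. -/
def MaxArity (t : OTree) (b : ℕ) : Prop :=
  ∀ p s, subtreeAt? t p = some s → s.children.length ≤ b

/-- `w` lies on the leftmost branch descending from `v` (always taking the leftmost child). -/
def OnLeftmostBranch (v w : List ℕ) : Prop :=
  v <+: w ∧ ∀ n (hn : n < w.length), v.length ≤ n → w.get ⟨n, hn⟩ = 0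

/-- `w` lies on the rightmost branch descending from `v` (always taking the rightmost child). -/
def OnRightmostBranch (t : OTree) (v w : List ℕ) : Prop :=
  v <+: w ∧ ∀ n (hn : n < w.length), v.length ≤ n →
    ∀ s, subtreeAt? t (w.take n) = some s → w.get ⟨n, hn⟩ + 1 = s.children.length


section ListAux

open List

variable {α : Type*} {β : Type*}

lemma beq_inst_eq : (List.instBEq : BEq (List ℕ)) = instBEqOfDecidableEq :=
  lawful_beq_subsingleton _ _

lemma indexOf_le_of_mem_left [DecidableEq α] {l₁ l₂ : List α} {p q : α}
    (hp : p ∈ l₁) (hq : q ∉ l₁) :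
    (l₁ ++ l₂).idxOf p ≤ (l₁ ++ l₂).idxOf q := by
  rw [List.idxOf_append_of_mem hp, List.idxOf_append_of_notMem hq]
  have := List.idxOf_lt_length_iff.mpr hp
  omega

lemma indexOf_map_inj [DecidableEq α] [DecidableEq β] {f : α → β}
    (hf : Function.Injective f) (l : List α) (x : α) :
    (l.map f).idxOf (f x) = l.idxOf x := by
  induction l with
  | nil => rfl
  | cons a l ih =>
    by_cases h : x = a
    · subst h; simp
    · have h' : f x ≠ f a := fun hc => h (hf hc)
      rw [List.map_cons, List.idxOf_cons_ne _ (Ne.symm h'), List.idxOf_cons_ne _ (Ne.symm h), ih]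

lemma mem_take_drop_iff [DecidableEq α] {l : List α} (h : l.Nodup) {i n : ℕ} {p : α} :
    p ∈ (l.drop i).take n ↔ p ∈ l ∧ i ≤ l.idxOf p ∧ l.idxOf p < i + n := by
  constructor
  · intro hp
    obtain ⟨j, hj, hget⟩ := List.mem_iff_getElem.mp hp
    have hj1 : j < n := lt_of_lt_of_le hj (by simp [List.length_take])
    have hj2 : i + j < l.length := by
      have := hj; simp only [List.length_take, List.length_drop] at this; omega
    have hval : l[i + j] = p := by
      rw [← hget, List.getElem_take, List.getElem_drop]
    have hidx : l.idxOf p = i + j := by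
      have := List.Nodup.idxOf_getElem h (i + j) hj2
      rw [hval] at this
      exact this
    have hmem : p ∈ l := by rw [← hval]; exact List.getElem_mem _
    exact ⟨hmem, by omega, by omega⟩
  · rintro ⟨hmem, h1, h2⟩
    have hlt : l.idxOf p < l.length := List.idxOf_lt_length_iff.mpr hmem
    refine List.mem_iff_getElem.mpr ⟨l.idxOf p - i, ?_, ?_⟩
    · simp only [List.length_take, List.length_drop]; omega
    · rw [List.getElem_take, List.getElem_drop]
      have h3 : i + (l.idxOf p - i) = l.idxOf p := by omega
      simp only [h3]
      exact List.getElem_idxOf hlt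

lemma flatten_indexOf_le [DecidableEq α] {R : β → β → Prop} [IsAsymm β R]
    (key : α → β) (F : β → List α) :
    ∀ (qs : List β), qs.Pairwise R →
      ∀ a b p q, a ∈ qs → b ∈ qs →
      (∀ x ∈ qs, ∀ y ∈ F x, key y = x) →
      p ∈ F a → q ∈ F b →
      (a = b → (F a).idxOf p ≤ (F a).idxOf q) →
      (R a b ∨ a = b) →
      ((qs.map F).flatten.idxOf p ≤ (qs.map F).flatten.idxOf q) := by
  intro qs
  induction qs with
  | nil => intro _ a b p q ha; cases ha
  | cons x rest ih =>
    intro hpw a b p q ha hb hkey hp hq hsame hab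
    have hkp : key p = a := hkey a ha p hp
    have hkq : key q = b := hkey b hb q hq
    rw [List.map_cons, List.flatten_cons]
    have hkeyx : ∀ y ∈ F x, key y = x := hkey x List.mem_cons_self
    by_cases hxa : x = a
    · subst hxa
      by_cases hxb : x = b
      · subst hxb
        rw [List.idxOf_append_of_mem hp, List.idxOf_append_of_mem hq]
        exact hsame rfl
      · have hq' : q ∉ F x := fun hc => hxb ((hkeyx q hc).symm.trans hkq)
        exact indexOf_le_of_mem_left hp hq'
    · by_cases hxb : x = b
      · exfalso
        subst hxb
        rcases hab with hR | rfl
        · rcases List.mem_cons.mp ha with h | h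
          · exact hxa h.symm
          · have : R x a := (List.pairwise_cons.mp hpw).1 a h
            exact asymm hR this
        · exact hxa rfl
      · have hp' : p ∉ F x := fun hc => hxa ((hkeyx p hc).symm.trans hkp)
        have hq' : q ∉ F x := fun hc => hxb ((hkeyx q hc).symm.trans hkq)
        rw [List.idxOf_append_of_notMem hp', List.idxOf_append_of_notMem hq']
        have ha' : a ∈ rest := by
          rcases List.mem_cons.mp ha with h | h
          · exact absurd h.symm hxa
          · exact h
        have hb' : b ∈ rest := by
          rcases List.mem_cons.mp hb with h | h
          · exact absurd h.symm hxb
          · exact h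
        have hkey' : ∀ y ∈ rest, ∀ z ∈ F y, key z = y := fun y hy => hkey y (List.mem_cons_of_mem _ hy)
        exact Nat.add_le_add_left
          (ih (List.pairwise_cons.mp hpw).2 a b p q ha' hb' hkey' hp hq hsame hab) _

end ListAux
section TreeAux

lemma subtreeAt?_append (t : OTree) (p q : List ℕ) :
    subtreeAt? t (p ++ q) = (subtreeAt? t p).bind (fun s => subtreeAt? s q) := by
  induction p generalizing t with
  | nil => simp [subtreeAt?]
  | cons i p ih =>
    simp only [List.cons_append, subtreeAt?]
    cases t.children[i]? with
    | none => rfl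
    | some c => exact ih c

lemma isVertex_nil (t : OTree) : IsVertex t [] := by simp [IsVertex, subtreeAt?]

lemma isVertex_of_prefix {t : OTree} {p q : List ℕ} (hpq : p <+: q) (hq : IsVertex t q) :
    IsVertex t p := by
  obtain ⟨r, rfl⟩ := hpq
  unfold IsVertex at *
  rw [subtreeAt?_append] at hq
  cases h : subtreeAt? t p with
  | none => rw [h] at hq; simp at hq
  | some s => simp

lemma one_le_height (t : OTree) : 1 ≤ height t := by
  cases t with | node cs => rw [height]; omega

lemma height_le_heightList {c : OTree} {cs : List OTree} (h : c ∈ cs) :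
    height c ≤ heightList cs := by
  induction cs with
  | nil => cases h
  | cons a cs ih =>
    rw [heightList]
    rcases List.mem_cons.mp h with rfl | h
    · exact le_max_left _ _
    · exact le_trans (ih h) (le_max_right _ _)

lemma heightList_eq_zero {cs : List OTree} (h : heightList cs = 0) : cs = [] := by
  cases cs with
  | nil => rfl
  | cons c cs => rw [heightList] at h; have := one_le_height c; omega

lemma height_subtreeAt? {p : List ℕ} : ∀ {t s : OTree}, subtreeAt? t p = some s →
    height s + p.length ≤ height t := by
  induction p with
  | nil => intro t s h; simp [subtreeAt?] at h; subst h; simp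
  | cons i p ih =>
    intro t s h
    rw [subtreeAt?] at h
    cases hc : t.children[i]? with
    | none => rw [hc] at h; cases h
    | some c =>
      rw [hc] at h
      have h1 := ih h
      have hc' : c ∈ t.children := List.mem_of_getElem? hc
      cases t with | node cs =>
      rw [height]
      have := height_le_heightList (show c ∈ cs from hc')
      simp only [List.length_cons]
      omega

lemma subtreeAt?_trunc (k : ℕ) (t : OTree) (p : List ℕ) :
    subtreeAt? (trunc k t) p =
      if p.length ≤ k then (subtreeAt? t p).map (trunc (k - p.length)) else none := by
  induction p generalizing t k with
  | nil => simp [subtreeAt?]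
  | cons i p ih =>
    cases k with
    | zero => simp [trunc, subtreeAt?, OTree.children]
    | succ k =>
      cases t with | node cs =>
      rw [subtreeAt?]
      simp only [trunc, OTree.children, List.getElem?_map]
      cases hc : cs[i]? with
      | none =>
        simp only [Option.map_none]
        rw [show subtreeAt? (OTree.node cs) (i :: p) = none by
          rw [subtreeAt?]; simp [OTree.children, hc]]
        simp
      | some c =>
        simp only [Option.map_some]
        rw [ih]
        rw [show subtreeAt? (OTree.node cs) (i :: p) = subtreeAt? c p by
          rw [subtreeAt?]; simp [OTree.children, hc]]
        simp only [List.length_cons]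
        by_cases hlk : p.length ≤ k
        · rw [if_pos hlk, if_pos (by omega)]
          have he : k + 1 - (p.length + 1) = k - p.length := by omega
          rw [he]
        · rw [if_neg hlk, if_neg (by omega)]

lemma isVertex_trunc {k : ℕ} {t : OTree} {p : List ℕ} :
    IsVertex (trunc k t) p ↔ IsVertex t p ∧ p.length ≤ k := by
  unfold IsVertex
  rw [subtreeAt?_trunc]
  by_cases h : p.length ≤ k
  · rw [if_pos h]; simp [h]
  · rw [if_neg h]; simp [h]

lemma height_trunc (k : ℕ) (t : OTree) : height (trunc k t) ≤ k + 1 := by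
  induction k generalizing t with
  | zero => cases t; simp [trunc, height, heightList]
  | succ k ih =>
    cases t with | node cs =>
    rw [trunc, height, OTree.children]
    have : heightList (cs.map (trunc k)) ≤ k + 1 := by
      induction cs with
      | nil => simp [heightList]
      | cons c cs ihc => rw [List.map_cons, heightList]; exact max_le (ih c) ihc
    omega

lemma mem_levelPaths {m : ℕ} {t : OTree} {q : List ℕ} :
    q ∈ levelPaths m t ↔ q.length = m ∧ IsVertex t q := by
  induction m generalizing t q with
  | zero =>
    simp only [levelPaths, List.mem_singleton, List.length_eq_zero_iff]
    constructor
    · rintro rfl; exact ⟨rfl, isVertex_nil t⟩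
    · rintro ⟨rfl, _⟩; rfl
  | succ m ih =>
    rw [levelPaths, List.mem_flatten]
    constructor
    · rintro ⟨L, hL, hqL⟩
      obtain ⟨⟨c, i⟩, hic, rfl⟩ := List.mem_map.mp hL
      obtain ⟨q', hq', rfl⟩ := List.mem_map.mp hqL
      obtain ⟨hlen, hvert⟩ := ih.mp hq'
      have hc : t.children[i]? = some c := by
        have := List.mk_mem_zipIdx_iff_getElem?.mp hic
        exact this
      refine ⟨by simp [hlen], ?_⟩
      unfold IsVertex at *
      rw [subtreeAt?]
      rw [hc]
      exact hvert
    · rintro ⟨hlen, hvert⟩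
      cases q with
      | nil => simp at hlen
      | cons i q' =>
        unfold IsVertex at hvert
        rw [subtreeAt?] at hvert
        cases hc : t.children[i]? with
        | none => rw [hc] at hvert; simp at hvert
        | some c =>
          rw [hc] at hvert
          refine ⟨(levelPaths m c).map (i :: ·), ?_, ?_⟩
          · exact List.mem_map.mpr ⟨(c, i), List.mk_mem_zipIdx_iff_getElem?.mpr hc, rfl⟩
          · exact List.mem_map.mpr ⟨q', ih.mpr ⟨by simpa using hlen, hvert⟩, rfl⟩

lemma le_fst_of_mem_enumFrom' {α : Type*} {x : α × ℕ} :
    ∀ {l : List α} {n : ℕ}, x ∈ l.zipIdx n → n ≤ x.2 := by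
  intro l
  induction l with
  | nil => intro n h; cases h
  | cons a l ih =>
    intro n h
    rw [List.zipIdx_cons] at h
    rcases List.mem_cons.mp h with rfl | h
    · rfl
    · exact le_trans (Nat.le_succ n) (ih h)

lemma pairwise_fst_lt_enumFrom {α : Type*} :
    ∀ (l : List α) (n : ℕ), (l.zipIdx n).Pairwise (fun a b => a.2 < b.2) := by
  intro l
  induction l with
  | nil => intro n; simp
  | cons a l ih =>
    intro n
    rw [List.zipIdx_cons]
    refine List.pairwise_cons.mpr ⟨fun y hy => ?_, ih (n + 1)⟩
    exact lt_of_lt_of_le (Nat.lt_succ_self n) (le_fst_of_mem_enumFrom' hy)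

lemma pairwise_fst_lt_enum {α : Type*} (l : List α) :
    l.zipIdx.Pairwise (fun a b => a.2 < b.2) :=
  pairwise_fst_lt_enumFrom l 0

lemma pairwise_levelPaths (m : ℕ) (t : OTree) :
    (levelPaths m t).Pairwise (List.Lex (· < ·)) := by
  induction m generalizing t with
  | zero => simp [levelPaths]
  | succ m ih =>
    rw [levelPaths, List.pairwise_flatten]
    constructor
    · intro L hL
      obtain ⟨⟨c, i⟩, _, rfl⟩ := List.mem_map.mp hL
      exact (ih c).map _ (fun a b h => List.Lex.cons h)
    · refine List.Pairwise.map _ ?_ (pairwise_fst_lt_enum t.children)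
      rintro ⟨c, i⟩ ⟨d, j⟩ hij x hx y hy
      obtain ⟨x', _, rfl⟩ := List.mem_map.mp hx
      obtain ⟨y', _, rfl⟩ := List.mem_map.mp hy
      exact List.Lex.rel hij

lemma cutLevel_pos (ε : ℝ) (h : ℕ) : 1 ≤ cutLevel ε h := le_max_right _ _

lemma cutLevel_add_one_le {ε : ℝ} (hε1 : ε ≤ 1/2) {h : ℕ} (hh : 2 ≤ h) :
    cutLevel ε h + 1 ≤ h := by
  rw [cutLevel]
  have hfl : ⌊ε * (h : ℝ)⌋₊ < h := by
    rcases le_or_gt ε 0 with h0 | h0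
    · have : ε * (h : ℝ) ≤ 0 := mul_nonpos_of_nonpos_of_nonneg h0 (by positivity)
      have : ⌊ε * (h : ℝ)⌋₊ = 0 := Nat.floor_of_nonpos this
      omega
    · have h1 : ε * (h : ℝ) < h := by
        have : (0 : ℝ) < h := by exact_mod_cast lt_of_lt_of_le (by norm_num) hh
        nlinarith
      exact Nat.floor_lt' (by positivity) |>.mpr h1
  omega

lemma lex_take_or_eq {p q : List ℕ} (h : List.Lex (· < ·) p q) :
    ∀ n : ℕ, List.Lex (· < ·) (p.take n) (q.take n) ∨ p.take n = q.take n := by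
  induction h with
  | nil =>
    intro n
    cases n with
    | zero => right; rfl
    | succ n => left; rw [List.take_nil, List.take_succ_cons]; exact List.Lex.nil
  | @rel a l₁ b l₂ hab =>
    intro n
    cases n with
    | zero => right; rfl
    | succ n => left; rw [List.take_succ_cons, List.take_succ_cons]; exact List.Lex.rel hab
  | @cons a l₁ l₂ h ih =>
    intro n
    cases n with
    | zero => right; rfl
    | succ n =>
      rw [List.take_succ_cons, List.take_succ_cons]
      rcases ih n with h' | h'
      · left; exact List.Lex.cons h'
      · right; rw [h']

lemma lex_drop_of_take_eq :
    ∀ (m : ℕ) {p q : List ℕ}, List.Lex (· < ·) p q → p.take m = q.take m →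
      List.Lex (· < ·) (p.drop m) (q.drop m) := by
  intro m
  induction m with
  | zero => intro p q h _; simpa using h
  | succ m ih =>
    intro p q h htake
    cases p with
    | nil =>
      cases q with
      | nil => cases h
      | cons b q' => rw [List.take_nil, List.take_succ_cons] at htake; cases htake
    | cons a p' =>
      cases q with
      | nil => cases h
      | cons b q' =>
        rw [List.take_succ_cons, List.take_succ_cons, List.cons.injEq] at htake
        obtain ⟨rfl, htake'⟩ := htake
        rw [List.drop_succ_cons, List.drop_succ_cons]
        exact ih (List.lex_cons_iff.mp h) htake'

end TreeAux
lemma vEBAux_succ_of_lt (ε : ℝ) (fuel : ℕ) (t : OTree) (h1 : ¬ height t ≤ 1) :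
    vEBAux ε (fuel + 1) t =
      vEBAux ε fuel (trunc (cutLevel ε (height t) - 1) t) ++
        ((levelPaths (cutLevel ε (height t)) t).map fun q =>
          match subtreeAt? t q with
          | some s => (vEBAux ε fuel s).map (q ++ ·)
          | none => []).flatten := by
  rw [vEBAux, if_neg h1]

local notation "idxD" => @List.idxOf (List ℕ) instBEqOfDecidableEq

lemma vEBAux_spec (ε : ℝ) (hε : ε ≤ 1/2) :
    ∀ fuel t, height t ≤ fuel →
      (∀ p, p ∈ vEBAux ε fuel t ↔ IsVertex t p) ∧
      (vEBAux ε fuel t).Nodup ∧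
      (∀ p q, p <+: q → IsVertex t q →
        idxD p (vEBAux ε fuel t) ≤ idxD q (vEBAux ε fuel t)) ∧
      (∀ p q, p.length = q.length → List.Lex (· < ·) p q → IsVertex t p → IsVertex t q →
        idxD p (vEBAux ε fuel t) ≤ idxD q (vEBAux ε fuel t)) := by
  intro fuel
  induction fuel with
  | zero => intro t h; have := one_le_height t; omega
  | succ fuel ih =>
    intro t hht
    by_cases h1 : height t ≤ 1
    · have hveq : vEBAux ε (fuel+1) t = [[]] := by rw [vEBAux, if_pos h1]
      have hv : ∀ p, IsVertex t p ↔ p = [] := by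
        intro p
        cases t with | node cs =>
        have hcs : cs = [] := heightList_eq_zero (by rw [height] at h1; omega)
        subst hcs
        cases p with
        | nil => simp [isVertex_nil]
        | cons i p => simp [IsVertex, subtreeAt?, OTree.children]
      rw [hveq]
      refine ⟨?_, ?_, ?_, ?_⟩
      · intro p; rw [hv]; simp
      · simp
      · intro p q hpq hq
        have hq' := (hv q).mp hq
        subst hq'
        have hp' := List.prefix_nil.mp hpq
        subst hp'
        exact le_rfl
      · intro p q hlen hlex hp hq
        rw [(hv p).mp hp, (hv q).mp hq]
    · have hh2 : 2 ≤ height t := by omega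
      set m := cutLevel ε (height t) with hm
      have hm1 : 1 ≤ m := cutLevel_pos ε _
      have hmh : m + 1 ≤ height t := cutLevel_add_one_le hε hh2
      set T := trunc (m - 1) t with hT
      set f : List ℕ → List (List ℕ) := fun q =>
        match subtreeAt? t q with
        | some s => (vEBAux ε fuel s).map (q ++ ·)
        | none => [] with hf
      have hveq : vEBAux ε (fuel+1) t =
          vEBAux ε fuel T ++ ((levelPaths m t).map f).flatten := by
        rw [vEBAux_succ_of_lt ε fuel t h1]
      have hTfuel : height T ≤ fuel := le_trans (height_trunc _ _) (by omega)
      have ihT := ih T hTfuel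
      have hsub : ∀ q ∈ levelPaths m t, ∃ s, subtreeAt? t q = some s ∧ height s ≤ fuel := by
        intro q hq
        obtain ⟨hlen, hvert⟩ := mem_levelPaths.mp hq
        rw [IsVertex] at hvert
        cases hs : subtreeAt? t q with
        | none => rw [hs] at hvert; simp at hvert
        | some s =>
          refine ⟨s, rfl, ?_⟩
          have := height_subtreeAt? hs
          omega
      have hmemT : ∀ p, p ∈ vEBAux ε fuel T ↔ (IsVertex t p ∧ p.length ≤ m - 1) := by
        intro p; rw [ihT.1 p, hT, isVertex_trunc]
      have hkey : ∀ x ∈ levelPaths m t, ∀ y ∈ f x, y.take m = x := by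
        intro x hx y hy
        obtain ⟨hlen, _⟩ := mem_levelPaths.mp hx
        obtain ⟨s, hs, _⟩ := hsub x hx
        rw [hf] at hy
        simp only [hs] at hy
        obtain ⟨r, _, rfl⟩ := List.mem_map.mp hy
        rw [← hlen, List.take_left]
      have hblock : ∀ p, IsVertex t p → m ≤ p.length →
          p.take m ∈ levelPaths m t ∧ p ∈ f (p.take m) ∧
          ∀ s, subtreeAt? t (p.take m) = some s →
            (IsVertex s (p.drop m) ∧ p.drop m ∈ vEBAux ε fuel s) := by
        intro p hp hpm
        have htp : p.take m ∈ levelPaths m t := by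
          rw [mem_levelPaths]
          refine ⟨by rw [List.length_take]; omega,
            isVertex_of_prefix (List.take_prefix m p) hp⟩
        obtain ⟨s, hs, hsf⟩ := hsub _ htp
        have hdrop : IsVertex s (p.drop m) := by
          rw [IsVertex] at hp ⊢
          rw [← List.take_append_drop m p, subtreeAt?_append, hs] at hp
          exact hp
        have hmem : p.drop m ∈ vEBAux ε fuel s := ((ih s hsf).1 _).mpr hdrop
        refine ⟨htp, ?_, ?_⟩
        · rw [hf]
          simp only [hs]
          exact List.mem_map.mpr ⟨p.drop m, hmem, List.take_append_drop m p⟩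
        · intro s' hs'
          rw [hs] at hs'
          cases hs'
          exact ⟨hdrop, hmem⟩
      have hmemB : ∀ p, p ∈ ((levelPaths m t).map f).flatten ↔
          (IsVertex t p ∧ m ≤ p.length) := by
        intro p
        rw [List.mem_flatten]
        constructor
        · rintro ⟨L, hL, hpL⟩
          obtain ⟨q, hq, rfl⟩ := List.mem_map.mp hL
          obtain ⟨hlen, _⟩ := mem_levelPaths.mp hq
          obtain ⟨s, hs, hsf⟩ := hsub q hq
          rw [hf] at hpL
          simp only [hs] at hpL
          obtain ⟨r, hr, rfl⟩ := List.mem_map.mp hpL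
          have hrv : IsVertex s r := ((ih s hsf).1 r).mp hr
          constructor
          · rw [IsVertex, subtreeAt?_append, hs]; exact hrv
          · simp [hlen]
        · rintro ⟨hp, hpm⟩
          obtain ⟨htp, hpf, _⟩ := hblock p hp hpm
          exact ⟨f (p.take m), List.mem_map.mpr ⟨_, htp, rfl⟩, hpf⟩
      have P1 : ∀ p, p ∈ vEBAux ε (fuel+1) t ↔ IsVertex t p := by
        intro p
        rw [hveq, List.mem_append, hmemT, hmemB]
        constructor
        · rintro (⟨h, _⟩ | ⟨h, _⟩) <;> exact h
        · intro h
          rcases le_or_gt m p.length with h' | h'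
          · right; exact ⟨h, h'⟩
          · left; exact ⟨h, by omega⟩
      have hndB : (((levelPaths m t).map f).flatten).Nodup := by
        rw [List.nodup_flatten]
        constructor
        · intro L hL
          obtain ⟨q, hq, rfl⟩ := List.mem_map.mp hL
          obtain ⟨s, hs, hsf⟩ := hsub q hq
          rw [hf]
          simp only [hs]
          exact List.Nodup.map (fun a b h => List.append_cancel_left h) (ih s hsf).2.1
        · rw [List.pairwise_map]
          apply (pairwise_levelPaths m t).imp_of_mem
          intro q q' hq hq' hlex
          intro x hxq hxq'
          have h1 := hkey q hq x hxq
          have h2 := hkey q' hq' x hxq'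
          rw [h1] at h2
          subst h2
          exact asymm hlex hlex
      have P2 : (vEBAux ε (fuel+1) t).Nodup := by
        rw [hveq, List.nodup_append]
        refine ⟨ihT.2.1, hndB, ?_⟩
        intro x hx _ hx' rfl
        have h1 := (hmemT x).mp hx
        have h2 := (hmemB x).mp hx'
        omega
      have hflat : ∀ p q, IsVertex t p → IsVertex t q → m ≤ p.length → m ≤ q.length →
          (List.Lex (· < ·) (p.take m) (q.take m) ∨ p.take m = q.take m) →
          (p.take m = q.take m → ∀ s, subtreeAt? t (p.take m) = some s →
            idxD (p.drop m) (vEBAux ε fuel s) ≤ idxD (q.drop m) (vEBAux ε fuel s)) →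
          (idxD p ((levelPaths m t).map f).flatten ≤
            idxD q ((levelPaths m t).map f).flatten) := by
        intro p q hp hq hpm hqm hor hsame
        obtain ⟨htp, hpf, _⟩ := hblock p hp hpm
        obtain ⟨htq, hqf, _⟩ := hblock q hq hqm
        refine flatten_indexOf_le (fun y => y.take m) f (levelPaths m t)
          (pairwise_levelPaths m t) (p.take m) (q.take m) p q htp htq hkey hpf hqf ?_ hor
        intro heq
        obtain ⟨s, hs, _⟩ := hsub _ htp
        have h := hsame heq s hs
        rw [hf]
        simp only [hs]
        have hinj : Function.Injective (p.take m ++ ·) :=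
          fun a b hab => List.append_cancel_left hab
        have e1 := indexOf_map_inj (f := (p.take m ++ ·)) hinj (vEBAux ε fuel s) (p.drop m)
        rw [List.take_append_drop] at e1
        have hq2 : p.take m ++ q.drop m = q := by rw [heq]; exact List.take_append_drop m q
        have e2 := indexOf_map_inj (f := (p.take m ++ ·)) hinj (vEBAux ε fuel s) (q.drop m)
        rw [hq2] at e2
        rw [e1, e2]
        exact h
      have P3 : ∀ p q, p <+: q → IsVertex t q →
          idxD p (vEBAux ε (fuel+1) t) ≤ idxD q (vEBAux ε (fuel+1) t) := by
        intro p q hpq hq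
        have hp : IsVertex t p := isVertex_of_prefix hpq hq
        rw [hveq]
        rcases le_or_gt m p.length with hpm | hpm
        · have hqm : m ≤ q.length := le_trans hpm hpq.length_le
          have hpn : p ∉ vEBAux ε fuel T := by rw [hmemT]; rintro ⟨_, h⟩; omega
          have hqn : q ∉ vEBAux ε fuel T := by rw [hmemT]; rintro ⟨_, h⟩; omega
          rw [@List.idxOf_append_of_notMem _ _ _ instBEqOfDecidableEq _ _ hpn, @List.idxOf_append_of_notMem _ _ _ instBEqOfDecidableEq _ _ hqn]
          apply Nat.add_le_add_left
          have htake : p.take m = q.take m :=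
            (hpq.take m).eq_of_length (by rw [List.length_take, List.length_take]; omega)
          apply hflat p q hp hq hpm hqm (Or.inr htake)
          intro _ s hs
          have hs' : subtreeAt? t (q.take m) = some s := by rw [← htake]; exact hs
          obtain ⟨hqv, _⟩ := (hblock q hq hqm).2.2 s hs'
          have hsf : height s ≤ fuel := by
            obtain ⟨s', hs2, hsf⟩ := hsub _ (hblock p hp hpm).1
            rw [hs2] at hs; cases hs; exact hsf
          exact (ih s hsf).2.2.1 (p.drop m) (q.drop m) (hpq.drop m) hqv
        · rcases le_or_gt m q.length with hqm | hqm
          · have hpmem : p ∈ vEBAux ε fuel T := (hmemT p).mpr ⟨hp, by omega⟩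
            have hqn : q ∉ vEBAux ε fuel T := by rw [hmemT]; rintro ⟨_, h⟩; omega
            exact indexOf_le_of_mem_left hpmem hqn
          · have hpmem : p ∈ vEBAux ε fuel T := (hmemT p).mpr ⟨hp, by omega⟩
            have hqmem : q ∈ vEBAux ε fuel T := (hmemT q).mpr ⟨hq, by omega⟩
            rw [@List.idxOf_append_of_mem _ _ _ instBEqOfDecidableEq _ _ hpmem, @List.idxOf_append_of_mem _ _ _ instBEqOfDecidableEq _ _ hqmem]
            exact ihT.2.2.1 p q hpq (isVertex_trunc.mpr ⟨hq, by omega⟩)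
      have P4 : ∀ p q, p.length = q.length → List.Lex (· < ·) p q →
          IsVertex t p → IsVertex t q →
          idxD p (vEBAux ε (fuel+1) t) ≤ idxD q (vEBAux ε (fuel+1) t) := by
        intro p q hlen hlex hp hq
        rw [hveq]
        rcases le_or_gt m p.length with hpm | hpm
        · have hqm : m ≤ q.length := by omega
          have hpn : p ∉ vEBAux ε fuel T := by rw [hmemT]; rintro ⟨_, h⟩; omega
          have hqn : q ∉ vEBAux ε fuel T := by rw [hmemT]; rintro ⟨_, h⟩; omega
          rw [@List.idxOf_append_of_notMem _ _ _ instBEqOfDecidableEq _ _ hpn, @List.idxOf_append_of_notMem _ _ _ instBEqOfDecidableEq _ _ hqn]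
          apply Nat.add_le_add_left
          apply hflat p q hp hq hpm hqm (lex_take_or_eq hlex m)
          intro htake s hs
          have hs' : subtreeAt? t (q.take m) = some s := by rw [← htake]; exact hs
          obtain ⟨hqv, _⟩ := (hblock q hq hqm).2.2 s hs'
          obtain ⟨hpv, _⟩ := (hblock p hp hpm).2.2 s hs
          have hsf : height s ≤ fuel := by
            obtain ⟨s', hs2, hsf⟩ := hsub _ (hblock p hp hpm).1
            rw [hs2] at hs; cases hs; exact hsf
          exact (ih s hsf).2.2.2 (p.drop m) (q.drop m)
            (by rw [List.length_drop, List.length_drop]; omega)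
            (lex_drop_of_take_eq m hlex htake) hpv hqv
        · have hqm : q.length < m := by omega
          have hpmem : p ∈ vEBAux ε fuel T := (hmemT p).mpr ⟨hp, by omega⟩
          have hqmem : q ∈ vEBAux ε fuel T := (hmemT q).mpr ⟨hq, by omega⟩
          rw [@List.idxOf_append_of_mem _ _ _ instBEqOfDecidableEq _ _ hpmem, @List.idxOf_append_of_mem _ _ _ instBEqOfDecidableEq _ _ hqmem]
          exact ihT.2.2.2 p q hlen hlex (isVertex_trunc.mpr ⟨hp, by omega⟩)
            (isVertex_trunc.mpr ⟨hq, by omega⟩)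
      exact ⟨P1, P2, P3, P4⟩
/-- Among the branches intersecting a memory interval `A`, ordered
left-to-right, the depths of the bottommost vertices of the branches contained in `A`
form a non-increasing sequence (stated for any two such branches, the left one `ℓ₁`
and the right one `ℓ₂`). -/
theorem bottommost_depths_antitone
    (ε : ℝ) (hε0 : 0 < ε) (hε1 : ε ≤ 1/2) (t : OTree) (ht : Uniform t)
    (A : Set (List ℕ)) (hA : MemInterval ε t A)
    (ℓ₁ ℓ₂ : List ℕ) (h1 : IsLeaf t ℓ₁) (h2 : IsLeaf t ℓ₂)
    (hord : List.Lex (· < ·) ℓ₁ ℓ₂)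
    (hint1 : ∃ n, n ≤ ℓ₁.length ∧ ℓ₁.take n ∈ A)
    (hint2 : ∃ n, n ≤ ℓ₂.length ∧ ℓ₂.take n ∈ A) :
    sSup {n | n ≤ ℓ₂.length ∧ ℓ₂.take n ∈ A}
      ≤ sSup {n | n ≤ ℓ₁.length ∧ ℓ₁.take n ∈ A} := by
  obtain ⟨i, N, hAeq⟩ := hA
  have spec := vEBAux_spec ε hε1 (height t) t le_rfl
  have hnd : (vEB ε t).Nodup := spec.2.1
  have hmemA : ∀ p, p ∈ A ↔
      p ∈ vEB ε t ∧ i ≤ idxD p (vEB ε t) ∧ idxD p (vEB ε t) < i + N := by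
    intro p
    rw [hAeq]
    exact mem_take_drop_iff hnd
  have hlen12 : ℓ₁.length = ℓ₂.length := by
    have e1 := ht ℓ₁ h1
    have e2 := ht ℓ₂ h2
    omega
  have hbdd₁ : BddAbove {n | n ≤ ℓ₁.length ∧ ℓ₁.take n ∈ A} :=
    ⟨ℓ₁.length, fun n hn => hn.1⟩
  have hbdd₂ : BddAbove {n | n ≤ ℓ₂.length ∧ ℓ₂.take n ∈ A} :=
    ⟨ℓ₂.length, fun n hn => hn.1⟩
  have hn₂ : sSup {n | n ≤ ℓ₂.length ∧ ℓ₂.take n ∈ A} ∈ {n | n ≤ ℓ₂.length ∧ ℓ₂.take n ∈ A} :=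
    Nat.sSup_mem hint2 hbdd₂
  have hn₁ : sSup {n | n ≤ ℓ₁.length ∧ ℓ₁.take n ∈ A} ∈ {n | n ≤ ℓ₁.length ∧ ℓ₁.take n ∈ A} :=
    Nat.sSup_mem hint1 hbdd₁
  set n₁ := sSup {n | n ≤ ℓ₁.length ∧ ℓ₁.take n ∈ A} with hn1d
  set n₂ := sSup {n | n ≤ ℓ₂.length ∧ ℓ₂.take n ∈ A} with hn2d
  by_contra hcon
  push_neg at hcon
  have hmem : n₂ ∈ {n | n ≤ ℓ₁.length ∧ ℓ₁.take n ∈ A} := by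
    refine ⟨by rw [hlen12]; exact hn₂.1, ?_⟩
    by_cases heq : ℓ₁.take n₂ = ℓ₂.take n₂
    · rw [heq]; exact hn₂.2
    · have hv1 : IsVertex t ℓ₁ := by rw [IsVertex, h1]; rfl
      have hv2 : IsVertex t ℓ₂ := by rw [IsVertex, h2]; rfl
      have hw : IsVertex t (ℓ₁.take n₂) := isVertex_of_prefix (List.take_prefix _ _) hv1
      have hvv : IsVertex t (ℓ₂.take n₂) := isVertex_of_prefix (List.take_prefix _ _) hv2
      have hu := hn₁.2
      have hvA := hn₂.2
      rw [hmemA] at hu hvA ⊢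
      refine ⟨(spec.1 _).mpr hw, ?_, ?_⟩
      · have hpre : ℓ₁.take n₁ <+: ℓ₁.take n₂ :=
          List.take_isPrefix_take.mpr (Or.inl hcon.le)
        have h3 := spec.2.2.1 (ℓ₁.take n₁) (ℓ₁.take n₂) hpre hw
        exact le_trans hu.2.1 h3
      · have hlex2 : List.Lex (· < ·) (ℓ₁.take n₂) (ℓ₂.take n₂) := by
          rcases lex_take_or_eq hord n₂ with h | h
          · exact h
          · exact absurd h heq
        have h4 := spec.2.2.2 (ℓ₁.take n₂) (ℓ₂.take n₂)
          (by rw [List.length_take, List.length_take, hlen12]) hlex2 hw hvv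
        exact lt_of_le_of_lt h4 hvA.2.2
  have := le_csSup hbdd₁ hmem
  omega

end VEB
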